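/- Fix n ≥ 3 and let R = ℚ[x,y,z]/I where I is the ideal generated by x^{n-2} - y², y² - z², (x-1)(y-1), (x-1)(z-1), and (y-1)(z-1). Let T be the class of x + y + z - x^{n-2} - 1 in R. Then T · (y - z) = -(y - z) in R. -/

import Mathlib

open MvPolynomial in
theorem monodromy_eps31 (n : ℕ) (hn : 3 ≤ n) :
    let I : Ideal (MvPolynomial (Fin 3) ℚ) :=
      Ideal.span {X 0 ^ (n - 2) - X 1 ^ 2, X 1 ^ 2 - X 2 ^ 2,
        (X 0 - 1) * (X 1 - 1), (X 0 - 1) * (X 2 - 1), (X 1 - 1) * (X 2 - 1)}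
    Ideal.Quotient.mk I (X 0 + X 1 + X 2 - X 0 ^ (n - 2) - 1) *
        Ideal.Quotient.mk I (X 1 - X 2)
      = - Ideal.Quotient.mk I (X 1 - X 2) := by
  intro I
  rw [← map_mul, ← map_neg, Ideal.Quotient.eq]
  set x : MvPolynomial (Fin 3) ℚ := X 0
  set y : MvPolynomial (Fin 3) ℚ := X 1
  set z : MvPolynomial (Fin 3) ℚ := X 2
  have h1 : x ^ (n - 2) - y ^ 2 ∈ I := Ideal.subset_span (by simp [x, y, z])
  have h2 : y ^ 2 - z ^ 2 ∈ I := Ideal.subset_span (by simp [x, y, z])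
  have h3 : (x - 1) * (y - 1) ∈ I := Ideal.subset_span (by simp [x, y, z])
  have h4 : (x - 1) * (z - 1) ∈ I := Ideal.subset_span (by simp [x, y, z])
  have h5 : (y - 1) * (z - 1) ∈ I := Ideal.subset_span (by simp [x, y, z])
  have key : (x + y + z - x ^ (n - 2) - 1) * (y - z) - (-(y - z)) =
      (-(y - z)) * (x ^ (n - 2) - y ^ 2) + (2 - y) * (y ^ 2 - z ^ 2) +
        (x - 1) * (y - 1) - (x - 1) * (z - 1) + (y - z) * ((y - 1) * (z - 1)) := by
    generalize x ^ (n - 2) = a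
    ring
  rw [key]
  exact add_mem (sub_mem (add_mem (add_mem (I.mul_mem_left _ h1) (I.mul_mem_left _ h2)) h3)
    h4) (I.mul_mem_left _ h5)
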